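/- arXiv:1807.00535 — 3 statements merged into one kernel-verified Lean document; each statement's English description precedes it below -/
import Mathlib

section
/- Let F be a field of characteristic different from 2, let A be a central simple F-algebra and let σ be an anisotropic involution of the first kind on A (i.e., σ(x)·x = 0 implies x = 0). Let a ∈ F^×, K = F(u) a quadratic field extension with u² = a, ι the nontrivial F-automorphism of K. If (A ⊗_F K, σ ⊗ ι) is hyperbolic, then there exists s ∈ A with σ(s) = s and s² = a·1. -/
open scoped TensorProduct

/-- Let `F` be a field of characteristic different from 2, `A` a central
simple `F`-algebra with an *anisotropic* involution `σ` of the first kind, `a ∈ F^×`,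
`K = F(u)` a quadratic field extension with `u² = a`, and `ι` the nontrivial
`F`-automorphism of `K`.  If `(A ⊗_F K, σ ⊗ ι)` is hyperbolic, then there is `s ∈ A`
with `σ s = s` and `s² = a·1`. -/
theorem exists_symmetric_square_root_of_hyperbolic_of_anisotropic
    (F A K : Type*) [Field F] [Ring A] [Algebra F A]
    (h2 : (2 : F) ≠ 0)
    [Algebra.IsCentral F A] [IsSimpleRing A] [FiniteDimensional F A]
    (σ : A →ₗ[F] A) (hσmul : ∀ x y : A, σ (x * y) = σ y * σ x)
    (hσinv : ∀ x : A, σ (σ x) = x)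
    (haniso : ∀ x : A, σ x * x = 0 → x = 0)
    [Field K] [Algebra F K] (hquad : Module.finrank F K = 2)
    (a : F) (ha : a ≠ 0)
    (u : K) (hu : u * u = algebraMap F K a) (hgen : Algebra.adjoin F {u} = ⊤)
    (ι : K ≃ₐ[F] K) (hι : ι u = -u)
    (hhyp : ∃ e : A ⊗[F] K, e * e = e ∧ TensorProduct.map σ ι.toLinearMap e = 1 - e) :
    ∃ s : A, σ s = s ∧ s * s = algebraMap F A a := by
  classical
  -- `u` is not in the bottom subalgebra
  have hubot : u ∉ (⊥ : Subalgebra F K) := by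
    intro hmem
    have hle : Algebra.adjoin F {u} ≤ ⊥ :=
      Algebra.adjoin_le (Set.singleton_subset_iff.mpr hmem)
    have : (⊥ : Subalgebra F K) = ⊤ := le_antisymm le_top (hgen ▸ hle)
    have h1 : Module.finrank F K = 1 := Subalgebra.bot_eq_top_iff_finrank_eq_one.mp this
    rw [hquad] at h1; exact (by norm_num : (2 : ℕ) ≠ 1) h1
  -- `{1, u}` is a basis of `K` over `F`
  have hli : LinearIndependent F ![(1 : K), u] := by
    rw [linearIndependent_fin2]
    constructor
    · show u ≠ 0
      intro h0
      exact hubot (h0 ▸ Subalgebra.zero_mem ⊥)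
    · intro c
      show c • u ≠ 1
      intro hc
      have hc0 : c ≠ 0 := by
        rintro rfl; rw [zero_smul] at hc; exact zero_ne_one hc
      apply hubot
      have huu : u = c⁻¹ • (1 : K) := by
        rw [← hc, smul_smul, inv_mul_cancel₀ hc0, one_smul]
      rw [huu, ← Algebra.algebraMap_eq_smul_one]
      exact Subalgebra.algebraMap_mem _ _
  let b : Module.Basis (Fin 2) F K :=
    basisOfLinearIndependentOfCardEqFinrank hli (by simp [hquad])
  have hb0 : b 0 = 1 := by
    simp [b, coe_basisOfLinearIndependentOfCardEqFinrank]
  have hb1 : b 1 = u := by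
    simp [b, coe_basisOfLinearIndependentOfCardEqFinrank]
  -- coordinate maps
  let φ : Fin 2 → (A ⊗[F] K →ₗ[F] A) := fun i =>
    (TensorProduct.rid F A).toLinearMap ∘ₗ TensorProduct.map LinearMap.id (b.coord i)
  have hφt : ∀ (i : Fin 2) (z : A) (k : K), φ i (z ⊗ₜ[F] k) = b.coord i k • z := by
    intro i z k
    simp [φ]
  have hcoord : ∀ i j : Fin 2, b.coord i (b j) = if j = i then 1 else 0 := by
    intro i j
    simp [Module.Basis.coord_apply, Module.Basis.repr_self, Finsupp.single_apply]
  have hφ00 : ∀ z : A, φ 0 (z ⊗ₜ[F] (1 : K)) = z := by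
    intro z; rw [← hb0, hφt, hcoord]; simp
  have hφ10 : ∀ z : A, φ 1 (z ⊗ₜ[F] (1 : K)) = 0 := by
    intro z; rw [← hb0, hφt, hcoord]; simp
  have hφ01 : ∀ z : A, φ 0 (z ⊗ₜ[F] u) = 0 := by
    intro z; rw [← hb1, hφt, hcoord]; simp
  have hφ11 : ∀ z : A, φ 1 (z ⊗ₜ[F] u) = z := by
    intro z; rw [← hb1, hφt, hcoord]; simp
  -- decomposition
  have hdec : ∀ z : A ⊗[F] K, z = (φ 0 z) ⊗ₜ[F] (1 : K) + (φ 1 z) ⊗ₜ[F] u := by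
    intro z
    induction z using TensorProduct.induction_on with
    | zero => simp
    | tmul p k =>
        rw [hφt, hφt, TensorProduct.smul_tmul, TensorProduct.smul_tmul, ← TensorProduct.tmul_add]
        congr 1
        rw [← hb0, ← hb1]
        have := b.sum_repr k
        rw [Fin.sum_univ_two] at this
        simp only [Module.Basis.coord_apply]
        exact this.symm
    | add p q hp hq =>
        rw [map_add, map_add, TensorProduct.add_tmul, TensorProduct.add_tmul]
        calc p + q = ((φ 0) p ⊗ₜ[F] 1 + (φ 1) p ⊗ₜ[F] u)
              + ((φ 0) q ⊗ₜ[F] 1 + (φ 1) q ⊗ₜ[F] u) := by rw [← hp, ← hq]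
          _ = _ := by abel
  -- uniqueness
  have huniq : ∀ x₁ y₁ x₂ y₂ : A,
      x₁ ⊗ₜ[F] (1 : K) + y₁ ⊗ₜ[F] u = x₂ ⊗ₜ[F] (1 : K) + y₂ ⊗ₜ[F] u →
      x₁ = x₂ ∧ y₁ = y₂ := by
    intro x₁ y₁ x₂ y₂ h
    constructor
    · have := congrArg (φ 0) h
      simpa [map_add, hφ00, hφ01] using this
    · have := congrArg (φ 1) h
      simpa [map_add, hφ10, hφ11] using this
  obtain ⟨e, heidem, hesig⟩ := hhyp
  set x : A := φ 0 e with hxdef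
  set y : A := φ 1 e with hydef
  have he : e = x ⊗ₜ[F] (1 : K) + y ⊗ₜ[F] u := hdec e
  -- the involution equation
  have hσeq : (σ x) ⊗ₜ[F] (1 : K) + (-(σ y)) ⊗ₜ[F] u
      = (1 - x) ⊗ₜ[F] (1 : K) + (-y) ⊗ₜ[F] u := by
    have hL : TensorProduct.map σ ι.toLinearMap e
        = (σ x) ⊗ₜ[F] (1 : K) + (-(σ y)) ⊗ₜ[F] u := by
      rw [he, map_add, TensorProduct.map_tmul, TensorProduct.map_tmul]
      simp [hι, TensorProduct.tmul_neg, TensorProduct.neg_tmul]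
    have hR : (1 : A ⊗[F] K) - e
        = (1 - x) ⊗ₜ[F] (1 : K) + (-y) ⊗ₜ[F] u := by
      rw [he, Algebra.TensorProduct.one_def, TensorProduct.sub_tmul,
        TensorProduct.neg_tmul]
      abel
    rw [← hL, ← hR]; exact hesig
  obtain ⟨hσx, hσy'⟩ := huniq _ _ _ _ hσeq
  have hσy : σ y = y := neg_inj.mp hσy'
  -- the idempotence equation
  have hmul : e * e
      = (x * x + a • (y * y)) ⊗ₜ[F] (1 : K) + (x * y + y * x) ⊗ₜ[F] u := by
    rw [he, add_mul, mul_add, mul_add]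
    rw [Algebra.TensorProduct.tmul_mul_tmul, Algebra.TensorProduct.tmul_mul_tmul,
      Algebra.TensorProduct.tmul_mul_tmul, Algebra.TensorProduct.tmul_mul_tmul]
    rw [hu, Algebra.algebraMap_eq_smul_one, TensorProduct.tmul_smul,
      TensorProduct.smul_tmul']
    rw [TensorProduct.add_tmul, TensorProduct.add_tmul]
    simp only [one_mul, mul_one]
    abel
  have hidem2 : (x * x + a • (y * y)) ⊗ₜ[F] (1 : K) + (x * y + y * x) ⊗ₜ[F] u
      = x ⊗ₜ[F] (1 : K) + y ⊗ₜ[F] u := by rw [← hmul, heidem, ← he]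
  obtain ⟨heq1, heq2⟩ := huniq _ _ _ _ hidem2
  -- basic consequences
  have hxx : a • (y * y) = x - x * x := eq_sub_of_add_eq' heq1
  have hσ1 : σ (1 : A) = 1 := by
    have h := hσmul (σ 1) 1
    rw [mul_one, hσinv] at h
    rw [mul_one] at h
    exact h.symm
  have hσ1x : σ (1 - x) = x := by
    rw [map_sub, hσ1, hσx, sub_sub_cancel]
  -- left multiplication by y is injective
  have hinj : ∀ z : A, y * z = 0 → z = 0 := by
    intro z hz
    have hyyz : y * (y * z) = 0 := by rw [hz, mul_zero]
    have hkey : σ z * ((x - x * x) * z) = 0 := by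
      rw [← hxx, smul_mul_assoc, mul_smul_comm, mul_assoc, hyyz, mul_zero, smul_zero]
    have hxz : x * z = 0 := by
      apply haniso
      calc σ (x * z) * (x * z) = (σ z * (1 - x)) * (x * z) := by rw [hσmul, hσx]
        _ = σ z * ((x - x * x) * z) := by noncomm_ring
        _ = 0 := hkey
    have h1xz : (1 - x) * z = 0 := by
      apply haniso
      calc σ ((1 - x) * z) * ((1 - x) * z) = (σ z * x) * ((1 - x) * z) := by
            rw [hσmul, hσ1x]
        _ = σ z * ((x - x * x) * z) := by noncomm_ring
        _ = 0 := hkey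
    have : z = x * z + (1 - x) * z := by noncomm_ring
    rw [hxz, h1xz, add_zero] at this
    exact this
  -- y is invertible
  have hLinj : Function.Injective (LinearMap.mulLeft F y) := by
    intro p q hpq
    simp only [LinearMap.mulLeft_apply] at hpq
    have : y * (p - q) = 0 := by rw [mul_sub, hpq, sub_self]
    have := hinj _ this
    exact sub_eq_zero.mp this
  obtain ⟨w, hyw⟩ := LinearMap.injective_iff_surjective.mp hLinj 1
  rw [LinearMap.mulLeft_apply] at hyw
  have hwy : w * y = 1 := by
    have h0 : y * (w * y - 1) = 0 := by
      rw [mul_sub, mul_one, ← mul_assoc, hyw, one_mul, sub_self]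
    exact sub_eq_zero.mp (hinj _ h0)
  -- w is symmetric
  have hσw : σ w = w := by
    have h1 : σ w * y = 1 := by
      have h := hσmul y w
      rw [hyw, hσ1, hσy] at h
      exact h.symm
    calc σ w = σ w * (y * w) := by rw [hyw, mul_one]
      _ = (σ w * y) * w := (mul_assoc _ _ _).symm
      _ = w := by rw [h1, one_mul]
  -- key identities
  have hyxw : y * (x * w) = 1 - x := by
    have hyx : y * x = y - x * y := eq_sub_of_add_eq' heq2
    calc y * (x * w) = (y - x * y) * w := by rw [← mul_assoc, hyx]
      _ = y * w - x * (y * w) := by noncomm_ring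
      _ = 1 - x := by rw [hyw, mul_one]
  have hxw : x * w = w - w * x := by
    calc x * w = (w * y) * (x * w) := by rw [hwy, one_mul]
      _ = w * (y * (x * w)) := by rw [mul_assoc]
      _ = w * (1 - x) := by rw [hyxw]
      _ = w - w * x := by noncomm_ring
  refine ⟨w * x, ?_, ?_⟩
  · calc σ (w * x) = σ x * σ w := hσmul w x
      _ = (1 - x) * w := by rw [hσx, hσw]
      _ = w - x * w := by noncomm_ring
      _ = w - (w - w * x) := by rw [hxw]
      _ = w * x := by noncomm_ring
  · calc (w * x) * (w * x) = w * ((x * w) * x) := by noncomm_ring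
      _ = w * ((w - w * x) * x) := by rw [hxw]
      _ = (w * w) * (x - x * x) := by noncomm_ring
      _ = (w * w) * (a • (y * y)) := by rw [← hxx]
      _ = a • ((w * w) * (y * y)) := mul_smul_comm _ _ _
      _ = a • (1 : A) := by
          congr 1
          calc (w * w) * (y * y) = w * ((w * y) * y) := by noncomm_ring
            _ = 1 := by rw [hwy, one_mul, hwy]
      _ = algebraMap F A a := (Algebra.algebraMap_eq_smul_one a).symm
end

section
/- Let F be a field of characteristic different from 2, let m = 2n with n odd, let J ∈ M_m(F) be invertible with Jᵀ = −J, and let σ be the symplectic involution on M_m(F) defined by σ(X) = J⁻¹ Xᵀ J. Then there is no s ∈ M_m(F) with σ(s) = s and s² = λ·I for some λ ∈ F^× that is not a square in F. -/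
set_option maxRecDepth 16000
set_option maxHeartbeats 1600000

open Module LinearMap Polynomial

section Aux
variable {K : Type*} [Field K]

lemma aux_mulVec_map {m : ℕ} (g : K ≃+* K) (A : Matrix (Fin m) (Fin m) K)
    (x : Fin m → K) :
    (A.map ⇑g).mulVec (⇑g ∘ x) = ⇑g ∘ A.mulVec x := by
  funext i
  simp [Matrix.mulVec, dotProduct, map_sum, Function.comp]

lemma aux_finrank_range_map {m : ℕ} (g : K ≃+* K) (A : Matrix (Fin m) (Fin m) K) :
    finrank K (LinearMap.range (A.map ⇑g).mulVecLin)
      = finrank K (LinearMap.range A.mulVecLin) := by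
  set R1 := LinearMap.range A.mulVecLin with hR1
  set R2 := LinearMap.range (A.map ⇑g).mulVecLin with hR2
  have hmem1 : ∀ v : R1, ⇑g ∘ (v : Fin m → K) ∈ R2 := by
    rintro ⟨v, x, rfl⟩
    exact ⟨⇑g ∘ x, by simpa [Matrix.mulVecLin_apply] using aux_mulVec_map g A x⟩
  have hmem2 : ∀ w : R2, ⇑g.symm ∘ (w : Fin m → K) ∈ R1 := by
    rintro ⟨w, y, rfl⟩
    refine ⟨⇑g.symm ∘ y, ?_⟩
    have := aux_mulVec_map g A (⇑g.symm ∘ y)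
    have h2 : ⇑g ∘ ⇑g.symm ∘ y = y := by funext i; simp
    rw [h2] at this
    simp only [Matrix.mulVecLin_apply]
    funext i
    have := congrFun this i
    apply g.injective
    simpa [Function.comp] using this.symm
  let j : R1 ≃+ R2 :=
    { toFun := fun v => ⟨⇑g ∘ (v : Fin m → K), hmem1 v⟩
      invFun := fun w => ⟨⇑g.symm ∘ (w : Fin m → K), hmem2 w⟩
      left_inv := by rintro ⟨v, hv⟩; ext i; simp
      right_inv := by rintro ⟨w, hw⟩; ext i; simp
      map_add' := by rintro ⟨v, hv⟩ ⟨w, hw⟩; ext i; simp }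
  have hrank : Module.rank K R2 = Module.rank K R1 := by
    refine rank_eq_of_equiv_equiv (ZeroHom.mk ⇑g.symm (map_zero g.symm)) j.symm
      g.symm.bijective ?_
    rintro r ⟨v, hv⟩
    ext i
    simp [j, Function.comp]
  simp only [finrank, hrank]

lemma aux_even_finrank_of_alt_nondeg (h2 : (2 : K) ≠ 0) (V : Type*) [AddCommGroup V]
    [Module K V] [FiniteDimensional K V] (B : LinearMap.BilinForm K V)
    (halt : B.IsAlt) (hnd : B.Nondegenerate) : Even (finrank K V) := by
  set r := finrank K V with hr
  let b : Basis (Fin r) K V := finBasis K V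
  set M := LinearMap.BilinForm.toMatrix b B with hM
  have hdet : M.det ≠ 0 := (LinearMap.BilinForm.nondegenerate_iff_det_ne_zero b).mp hnd
  have hMt : M.transpose = -M := by
    ext i j
    simp only [Matrix.transpose_apply, Matrix.neg_apply, hM, LinearMap.BilinForm.toMatrix_apply]
    exact (halt.neg_eq (b i) (b j)).symm
  by_contra hodd
  rw [Nat.not_even_iff_odd] at hodd
  have : M.det = -M.det := by
    conv_lhs => rw [← Matrix.det_transpose, hMt]
    rw [Matrix.det_neg, Fintype.card_fin, hodd.neg_one_pow, neg_one_mul]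
  have h0 : (2 : K) * M.det = 0 := by ring_nf; linear_combination this
  exact hdet (by
    rcases mul_eq_zero.mp h0 with h | h
    · exact absurd h h2
    · exact h)

/-- The core argument, over a field `K` containing a square root `u` of the scalar,
with a Galois-type automorphism `g` fixing the matrices and sending `u ↦ -u`. -/
lemma aux_main {m : ℕ} (h2 : (2 : K) ≠ 0) (g : K ≃+* K)
    (J' s' : Matrix (Fin m) (Fin m) K) (u : K) (hu : u ≠ 0)
    (hJt : J'.transpose = -J') (hJinv : J' * J'⁻¹ = 1)
    (hsJ : s'.transpose * J' = J' * s') (hss : s' * s' = (u ^ 2) • 1)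
    (hgs : s'.map ⇑g = s') (hgu : g u = -u) :
    4 ∣ m := by
  classical
  have hc2u : (2 : K) * u ≠ 0 := mul_ne_zero h2 hu
  set c : K := ((2 : K) * u)⁻¹ with hc
  have h2cu : c * ((2 : K) * u) = 1 := inv_mul_cancel₀ hc2u
  set P : Matrix (Fin m) (Fin m) K := c • (s' + u • (1 : Matrix (Fin m) (Fin m) K)) with hP
  have hsq : (s' + u • 1) * (s' + u • 1)
      = ((2 : K) * u) • (s' + u • (1 : Matrix (Fin m) (Fin m) K)) := by
    rw [add_mul, mul_add, mul_add, hss, Matrix.smul_mul, Matrix.mul_smul, Matrix.mul_smul,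
      mul_one, one_mul]
    rw [mul_one, smul_smul]
    module
  have hPP : P * P = P := by
    rw [hP, Matrix.smul_mul, Matrix.mul_smul, hsq, smul_smul, smul_smul, mul_assoc, h2cu,
      mul_one]
  have hPJ : P.transpose * J' = J' * P := by
    rw [hP, Matrix.transpose_smul, Matrix.transpose_add, Matrix.transpose_smul,
      Matrix.transpose_one, Matrix.smul_mul, Matrix.mul_smul, add_mul, mul_add, hsJ,
      Matrix.smul_mul, Matrix.mul_smul, one_mul, mul_one]
  set U := LinearMap.range P.mulVecLin with hU
  set U' := LinearMap.range (1 - P).mulVecLin with hU'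
  have hfix : ∀ v ∈ U, P.mulVec v = v := by
    rintro v ⟨x, rfl⟩
    simp only [Matrix.mulVecLin_apply, Matrix.mulVec_mulVec, hPP]
  -- the bilinear form
  set B : LinearMap.BilinForm K (Fin m → K) := Matrix.toBilin' J' with hB
  set B' : LinearMap.BilinForm K ↥U := B.restrict U with hB'
  have key_alt : ∀ x : Fin m → K, dotProduct x (J'.mulVec x) = 0 := by
    intro x
    have h1 : dotProduct x (J'.mulVec x)
        = -dotProduct x (J'.mulVec x) := by
      conv_lhs => rw [Matrix.dotProduct_mulVec, ← Matrix.transpose_transpose J',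
        Matrix.vecMul_transpose, hJt, Matrix.neg_mulVec, neg_dotProduct,
        dotProduct_comm]
    have h0 : (2 : K) * dotProduct x (J'.mulVec x) = 0 := by
      linear_combination h1
    rcases mul_eq_zero.mp h0 with h | h
    · exact absurd h h2
    · exact h
  have halt : B'.IsAlt := by
    intro v
    simpa [hB', hB, Matrix.toBilin'_apply'] using key_alt (v : Fin m → K)
  have hnd : B'.Nondegenerate := by
    refine LinearMap.BilinForm.Nondegenerate.ofSeparatingLeft ?_
    intro v hv
    have h1 : ∀ x : Fin m → K,
        dotProduct (v : Fin m → K) (J'.mulVec (P.mulVec x)) = 0 := by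
      intro x
      have := hv ⟨P.mulVec x, ⟨x, by simp [Matrix.mulVecLin_apply]⟩⟩
      simpa [hB', hB, Matrix.toBilin'_apply'] using this
    have h3 : ∀ x : Fin m → K,
        dotProduct (v : Fin m → K) (J'.mulVec x) = 0 := by
      intro x
      have h2x := h1 x
      rw [Matrix.mulVec_mulVec, ← hPJ, ← Matrix.mulVec_mulVec,
        Matrix.dotProduct_mulVec, Matrix.vecMul_transpose, hfix _ v.2] at h2x
      exact h2x
    have h4 : Matrix.vecMul (v : Fin m → K) J' = 0 := by
      funext i
      have := h3 (Pi.single i 1)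
      rw [Matrix.dotProduct_mulVec] at this
      simpa [dotProduct_single] using this
    have h5 : (v : Fin m → K) = 0 := by
      have := congrArg (fun w => Matrix.vecMul w J'⁻¹) h4
      simpa [Matrix.vecMul_vecMul, hJinv] using this
    exact Subtype.ext h5
  have heven : Even (finrank K ↥U) :=
    aux_even_finrank_of_alt_nondeg h2 _ B' halt hnd
  have hker : LinearMap.ker P.mulVecLin = U' := by
    ext x
    constructor
    · intro hx
      have hx' : P.mulVec x = 0 := hx
      exact ⟨x, by simp [Matrix.mulVecLin_apply, Matrix.sub_mulVec, Matrix.one_mulVec, hx']⟩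
    · rintro ⟨y, rfl⟩
      simp [LinearMap.mem_ker, Matrix.mulVecLin_apply, Matrix.mulVec_mulVec, Matrix.mulVec_sub,
        Matrix.mul_sub, Matrix.mul_one, hPP]
  have hsum : finrank K ↥U + finrank K ↥U' = m := by
    have h := LinearMap.finrank_range_add_finrank_ker P.mulVecLin
    rw [hker] at h
    rwa [Module.finrank_fin_fun] at h
  -- Galois symmetry
  have hgc : g c = -c := by
    rw [hc, map_inv₀, map_mul, hgu, map_ofNat, mul_neg, ← neg_inv]
  have hPg : P.map ⇑g = 1 - P := by
    ext i j
    by_cases hij : i = j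
    · subst hij
      simp only [Matrix.map_apply, hP, Matrix.smul_apply, Matrix.add_apply,
        Matrix.smul_apply, Matrix.one_apply_eq, Matrix.sub_apply, smul_eq_mul,
        map_mul, map_add, hgc, hgu, mul_one]
      have hgs' : g (s' i i) = s' i i := by
        have := congrFun (congrFun hgs i) i
        simpa [Matrix.map_apply] using this
      rw [hgs', hc]
      field_simp
      ring
    · simp only [Matrix.map_apply, hP, Matrix.smul_apply, Matrix.add_apply,
        Matrix.smul_apply, Matrix.one_apply_ne hij, Matrix.sub_apply, smul_eq_mul,
        map_mul, map_add, hgc, hgu, mul_zero, add_zero]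
      have hgs' : g (s' i j) = s' i j := by
        have := congrFun (congrFun hgs i) j
        simpa [Matrix.map_apply] using this
      rw [hgs']
      ring
  have heq : finrank K ↥U' = finrank K ↥U := by
    rw [hU', ← hPg, aux_finrank_range_map g P]
  obtain ⟨k, hk⟩ := heven
  refine ⟨k, ?_⟩
  omega

end Aux

/-- Let `F` be a field of characteristic different from 2, `m = 2n` with
`n` odd, `J ∈ M_m(F)` invertible with `Jᵀ = -J`, and let `σ(X) = J⁻¹ Xᵀ J` be the
corresponding symplectic involution on `M_m(F)`.  Then no `s ∈ M_m(F)` satisfies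
`σ s = s` and `s² = λ·1` for a nonsquare `λ ∈ F^×`. -/
theorem no_symmetric_square_root_of_nonsquare_split_symplectic
    (F : Type*) [Field F] (h2 : (2 : F) ≠ 0)
    (n : ℕ) (hn : Odd n) (m : ℕ) (hm : m = 2 * n)
    (J : Matrix (Fin m) (Fin m) F) (hJ : IsUnit J) (hJt : J.transpose = -J) :
    ¬ ∃ (s : Matrix (Fin m) (Fin m) F) (lam : F),
        lam ≠ 0 ∧ (¬ ∃ b : F, b * b = lam) ∧
        J⁻¹ * s.transpose * J = s ∧ s * s = lam • (1 : Matrix (Fin m) (Fin m) F) := by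
  rintro ⟨s, lam, hlam0, hlam, hσ, hs2⟩
  classical
  have hJdet : IsUnit J.det := (Matrix.isUnit_iff_isUnit_det J).mp hJ
  have hJJ : J * J⁻¹ = 1 := Matrix.mul_nonsing_inv J hJdet
  have hsJ : s.transpose * J = J * s := by
    have h := congrArg (fun X => J * X) hσ
    simpa [← Matrix.mul_assoc, hJJ] using h
  set q : Polynomial F := X ^ 2 - C lam with hq
  have hirr : Irreducible q :=
    X_pow_sub_C_irreducible_of_prime Nat.prime_two
      (fun b hb => hlam ⟨b, by rw [← sq]; exact hb⟩)
  haveI := Fact.mk hirr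
  set φ : F →+* AdjoinRoot q := algebraMap F (AdjoinRoot q) with hφdef
  have hφ : Function.Injective ⇑φ := φ.injective
  set u : AdjoinRoot q := AdjoinRoot.root q with hudef
  have hu2 : u ^ 2 = φ lam := by
    have h0 := AdjoinRoot.eval₂_root q
    rw [hq] at h0
    simp only [Polynomial.eval₂_sub, Polynomial.eval₂_pow, Polynomial.eval₂_X,
      Polynomial.eval₂_C, sub_eq_zero] at h0
    rw [hφdef, AdjoinRoot.algebraMap_eq]
    exact h0
  have h2K : (2 : AdjoinRoot q) ≠ 0 := by
    intro h
    apply h2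
    apply hφ
    rw [map_ofNat, h, map_zero]
  have hlamK : φ lam ≠ 0 := fun h => hlam0 (hφ (by rw [h, map_zero]))
  have hu0 : u ≠ 0 := by
    intro h
    apply hlamK
    rw [← hu2, h]
    ring
  -- the Galois automorphism
  have hg0 : Polynomial.aeval (-u) q = 0 := by
    show Polynomial.aeval (-u) (X ^ 2 - C lam) = 0
    rw [map_sub, map_pow, Polynomial.aeval_X, Polynomial.aeval_C, neg_sq, hu2, hφdef,
      sub_self]
  set gh : AdjoinRoot q →ₐ[F] AdjoinRoot q := AdjoinRoot.liftAlgHom q (Algebra.ofId F (AdjoinRoot q)) (-u) hg0 with hghdef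
  have hghu : gh u = -u := AdjoinRoot.liftAlgHom_root q _ (-u) hg0
  have hgg : gh.comp gh = AlgHom.id F (AdjoinRoot q) := by
    apply AdjoinRoot.algHom_ext
    simp [AlgHom.comp_apply, hghu, ← hudef]
  set ge : AdjoinRoot q ≃ₐ[F] AdjoinRoot q := AlgEquiv.ofAlgHom gh gh hgg hgg with hgedef
  set g : AdjoinRoot q ≃+* AdjoinRoot q := ge.toRingEquiv with hgdef
  have hgcoe : ∀ x, g x = gh x := fun x => rfl
  -- matrices over K
  set J' : Matrix (Fin m) (Fin m) (AdjoinRoot q) := J.map ⇑φ with hJ'def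
  set s' : Matrix (Fin m) (Fin m) (AdjoinRoot q) := s.map ⇑φ with hs'def
  have hJ't : J'.transpose = -J' := by
    rw [hJ'def, ← Matrix.transpose_map, hJt]
    ext i j
    simp [Matrix.map_apply]
  have hJ'det : IsUnit J'.det := by
    rw [hJ'def, ← RingHom.mapMatrix_apply, ← RingHom.map_det]
    exact hJdet.map φ
  have hJ'inv : J' * J'⁻¹ = 1 := Matrix.mul_nonsing_inv J' hJ'det
  have hs'J : s'.transpose * J' = J' * s' := by
    rw [hs'def, hJ'def, ← Matrix.transpose_map, ← Matrix.map_mul, ← Matrix.map_mul, hsJ]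
  have hss' : s' * s' = (u ^ 2) • (1 : Matrix (Fin m) (Fin m) (AdjoinRoot q)) := by
    rw [hs'def, ← Matrix.map_mul, hs2, hu2]
    ext i j
    simp [Matrix.map_apply, Matrix.smul_apply, Matrix.one_apply, apply_ite ⇑φ, mul_ite]
  have hgs : s'.map ⇑g = s' := by
    ext i j
    simp only [Matrix.map_apply, hs'def, hgcoe]
    exact ge.commutes (s i j)
  have hgu : g u = -u := hghu
  have hdvd : 4 ∣ m := aux_main h2K g J' s' u hu0 hJ't hJ'inv hs'J hss' hgs hgu
  obtain ⟨k, hk⟩ := hn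
  obtain ⟨t, ht⟩ := hdvd
  omega
end

section
/- Let k be a field of characteristic 0, A a central simple k-algebra, and σ an involution of the first kind on A. Let B̂ = A((ξ)) be the ring of formal Laurent series over A with the unitary involution τ̂(∑ a_i ξ^i) = ∑ (−1)^i σ(a_i) ξ^i. Then (A,σ) is isotropic if and only if (B̂,τ̂) is isotropic; that is, there exists a nonzero a ∈ A with σ(a)·a = 0 if and only if there exists a nonzero y ∈ B̂ with τ̂(y)·y = 0. -/
noncomputable section

/-- The involution `τ̂(∑ aᵢ ξ^i) = ∑ (−1)^i σ(aᵢ) ξ^i` on the Laurent series ring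
`B̂ = A((ξ))`, for `σ` a linear map on `A`. -/
def tauHat {k A : Type*} [Field k] [Ring A] [Algebra k A] (σ : A →ₗ[k] A)
    (y : LaurentSeries A) : LaurentSeries A where
  coeff i := ((-1 : k) ^ i) • σ (y.coeff i)
  isPWO_support' := y.isPWO_support.mono (by
    intro i hi
    simp only [Function.mem_support, ne_eq] at hi ⊢
    intro h
    exact hi (by rw [h, map_zero, smul_zero]))

/-- Let `k` be a field of characteristic 0, `A` a central simple
`k`-algebra and `σ` an involution of the first kind on `A`.  Let `B̂ = A((ξ))` with the
unitary involution `τ̂(∑ aᵢ ξ^i) = ∑ (−1)^i σ(aᵢ) ξ^i`.  Then `(A, σ)` is isotropic if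
and only if `(B̂, τ̂)` is isotropic. -/
theorem isotropic_iff_laurent_isotropic
    (k A : Type*) [Field k] [CharZero k] [Ring A] [Algebra k A]
    [Algebra.IsCentral k A] [IsSimpleRing A] [FiniteDimensional k A]
    (σ : A →ₗ[k] A) (hσmul : ∀ x y : A, σ (x * y) = σ y * σ x)
    (hσinv : ∀ x : A, σ (σ x) = x) :
    (∃ a : A, a ≠ 0 ∧ σ a * a = 0) ↔
      (∃ y : LaurentSeries A, y ≠ 0 ∧ tauHat σ y * y = 0) := by
  have hσ0 : σ 0 = 0 := map_zero σ
  have hσinj : ∀ z : A, σ z = 0 → z = 0 := fun z hz => by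
    have := congrArg σ hz
    rwa [hσinv, map_zero] at this
  constructor
  · rintro ⟨a, ha, h0⟩
    refine ⟨HahnSeries.single 0 a, by simpa using ha, ?_⟩
    have ht : tauHat σ (HahnSeries.single 0 a) = HahnSeries.single 0 (σ a) := by
      ext i
      simp only [tauHat]
      rcases eq_or_ne i 0 with h | h
      · subst h; simp
      · rw [HahnSeries.coeff_single_of_ne h, HahnSeries.coeff_single_of_ne h, map_zero,
          smul_zero]
    rw [ht, HahnSeries.single_mul_single, h0]
    simp
  · rintro ⟨y, hy, h0⟩
    set x := tauHat σ y with hxdef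
    have hc : ∀ i, x.coeff i = ((-1 : k) ^ i) • σ (y.coeff i) := fun i => rfl
    have hne : ∀ i : ℤ, ((-1 : k) ^ i) ≠ 0 := fun i =>
      zpow_ne_zero i (neg_ne_zero.mpr one_ne_zero)
    have hcoeff : ∀ i, x.coeff i = 0 ↔ y.coeff i = 0 := by
      intro i
      rw [hc i]
      constructor
      · intro h
        rcases smul_eq_zero.mp h with h | h
        · exact absurd h (hne i)
        · exact hσinj _ h
      · intro h; rw [h, map_zero, smul_zero]
    have hxne : x ≠ 0 := by
      intro h
      apply hy
      ext i
      have : x.coeff i = 0 := by rw [h]; rfl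
      simpa using (hcoeff i).mp this
    have horder : x.order = y.order := by
      apply le_antisymm
      · exact HahnSeries.order_le_of_coeff_ne_zero
          (fun h => HahnSeries.coeff_order_eq_zero.not.mpr hy ((hcoeff _).mp h))
      · exact HahnSeries.order_le_of_coeff_ne_zero
          (fun h => HahnSeries.coeff_order_eq_zero.not.mpr hxne ((hcoeff _).mpr h))
    have hmul := HahnSeries.coeff_mul_order_add_order x y
    rw [h0, HahnSeries.coeff_zero, HahnSeries.leadingCoeff_eq (x := x),
      HahnSeries.leadingCoeff_eq (x := y)] at hmul
    rw [horder, hc y.order, smul_mul_assoc] at hmul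
    have key : σ (y.coeff y.order) * y.coeff y.order = 0 := by
      rcases smul_eq_zero.mp hmul.symm with h | h
      · exact absurd h (hne _)
      · exact h
    exact ⟨y.coeff y.order, HahnSeries.coeff_order_eq_zero.not.mpr hy, key⟩

end
end
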